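/- Let Ω be an open subset of X. If S_t φ = S^D_t φ for all φ ∈ L₂(Ω) and all t > 0, then the relative capacity of the boundary of Ω vanishes: cap_Ω(∂Ω) = 0. -/

import Mathlib

open MeasureTheory Filter Topology Set ENNReal
open scoped ENNReal

namespace DirichletPaper

variable {X : Type*} [MeasurableSpace X]

/-- The unit cut-off `0 ∨ φ ∧ 1`. -/
def cut (φ : X → ℝ) : X → ℝ := fun x => max 0 (min (φ x) 1)

/-- A symmetric Dirichlet form on `L₂(X, μ)`, modelled on genuine functions with
all identifications made almost everywhere. -/
structure DirichletForm (μ : Measure X) where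
  dom : Set (X → ℝ)
  form : (X → ℝ) → (X → ℝ) → ℝ
  dom_memLp : ∀ φ ∈ dom, MemLp φ 2 μ
  zero_mem : (0 : X → ℝ) ∈ dom
  add_mem : ∀ φ ∈ dom, ∀ ψ ∈ dom, φ + ψ ∈ dom
  smul_mem : ∀ (c : ℝ), ∀ φ ∈ dom, c • φ ∈ dom
  mul_mem : ∀ φ ∈ dom, ∀ ψ ∈ dom, (∃ C, ∀ᵐ x ∂μ, |φ x| ≤ C) →
    (∃ C, ∀ᵐ x ∂μ, |ψ x| ≤ C) → φ * ψ ∈ dom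
  congr_mem : ∀ φ ∈ dom, ∀ ψ : X → ℝ, ψ =ᵐ[μ] φ → ψ ∈ dom
  congr_form : ∀ φ ∈ dom, ∀ ψ ∈ dom, ∀ φ' ∈ dom, ∀ ψ' ∈ dom, φ' =ᵐ[μ] φ → ψ' =ᵐ[μ] ψ →
    form φ' ψ' = form φ ψ
  symm : ∀ φ ψ, form φ ψ = form ψ φ
  add_left : ∀ φ ∈ dom, ∀ ψ ∈ dom, ∀ χ ∈ dom, form (φ + ψ) χ = form φ χ + form ψ χ
  smul_left : ∀ (c : ℝ), ∀ φ ∈ dom, ∀ ψ ∈ dom, form (c • φ) ψ = c * form φ ψ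
  nonneg : ∀ φ ∈ dom, 0 ≤ form φ φ
  closed : ∀ (f : ℕ → X → ℝ) (φ : X → ℝ), (∀ n, f n ∈ dom) → MemLp φ 2 μ →
    Tendsto (fun n => eLpNorm (f n - φ) 2 μ) atTop (𝓝 0) →
    (∀ ε > 0, ∃ N, ∀ m ≥ N, ∀ n ≥ N, form (f m - f n) (f m - f n) < ε) →
    φ ∈ dom ∧ Tendsto (fun n => form (f n - φ) (f n - φ)) atTop (𝓝 0)
  markov : ∀ φ ∈ dom, cut φ ∈ dom ∧ form (cut φ) (cut φ) ≤ form φ φ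

variable {μ : Measure X}

/-- The quadratic form associated with a Dirichlet form. -/
def DirichletForm.q (E : DirichletForm μ) : (X → ℝ) → ℝ := fun φ => E.form φ φ

/-- Locality: `E(ψ,φ) = 0` whenever `φ ψ = 0`. -/
def IsLocal (E : DirichletForm μ) : Prop :=
  ∀ φ ∈ E.dom, ∀ ψ ∈ E.dom, (∀ᵐ x ∂μ, φ x * ψ x = 0) → E.form ψ φ = 0

/-- Strong locality: `E(φ,ψ) = 0` whenever `(φ + a 1) ψ = 0`. -/
def IsStronglyLocal (E : DirichletForm μ) : Prop :=
  ∀ φ ∈ E.dom, ∀ ψ ∈ E.dom, ∀ a : ℝ, (∀ᵐ x ∂μ, (φ x + a) * ψ x = 0) → E.form φ ψ = 0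

/-- `D(E) ∩ C_c(X)` is dense in `C₀(X)` for the supremum norm. -/
def DenseInC0 [TopologicalSpace X] (E : DirichletForm μ) : Prop :=
  ∀ g : X → ℝ, Continuous g → Tendsto g (cocompact X) (𝓝 0) → ∀ ε > 0,
    ∃ φ ∈ E.dom, Continuous φ ∧ HasCompactSupport φ ∧ ∀ x, |φ x - g x| < ε

/-- Regularity: `D(E) ∩ C_c(X)` is dense in `C₀(X)` (sup norm) and in `D(E)` (graph norm). -/
def IsRegular [TopologicalSpace X] (E : DirichletForm μ) : Prop :=
  DenseInC0 E ∧ ∀ φ ∈ E.dom, ∀ ε > 0, ∃ ψ ∈ E.dom, Continuous ψ ∧ HasCompactSupport ψ ∧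
    (∫ x, (φ x - ψ x) ^ 2 ∂μ) + E.form (φ - ψ) (φ - ψ) < ε

/-- The squared graph norm `‖φ‖₂² + q(φ)` of a quadratic form `q`. -/
noncomputable def graphNormSq (μ : Measure X) (q : (X → ℝ) → ℝ) (φ : X → ℝ) : ℝ :=
  (∫ x, φ x ^ 2 ∂μ) + q φ

/-- `D_Ω`: the elements of the domain whose support is a compact subset of `Ω`. -/
def DOmegaGen [TopologicalSpace X] (dom : Set (X → ℝ)) (Ω : Set X) : Set (X → ℝ) :=
  {φ ∈ dom | IsCompact (tsupport φ) ∧ tsupport φ ⊆ Ω}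

/-- `D(E_D)`: the closure of `D_Ω` with respect to the graph norm. -/
def domDGen [TopologicalSpace X] (μ : Measure X) (dom : Set (X → ℝ)) (q : (X → ℝ) → ℝ)
    (Ω : Set X) : Set (X → ℝ) :=
  {φ ∈ dom | ∃ f : ℕ → X → ℝ, (∀ n, f n ∈ DOmegaGen dom Ω) ∧
    Tendsto (fun n => graphNormSq μ q (f n - φ)) atTop (𝓝 0)}

/-- The domain of the Dirichlet restriction `E_D` of `E` to an open set `Ω`. -/
def DirichletForm.domD [TopologicalSpace X] (E : DirichletForm μ) (Ω : Set X) :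
    Set (X → ℝ) :=
  domDGen μ E.dom E.q Ω

/-- The relative capacity `cap_Ω(A)` of `A ⊆ closure Ω` with respect to a form
with domain `dom` and quadratic part `q`. -/
noncomputable def relCap [TopologicalSpace X] (μ : Measure X) (dom : Set (X → ℝ))
    (q : (X → ℝ) → ℝ) (Ω A : Set X) : ℝ≥0∞ :=
  sInf {r : ℝ≥0∞ | ∃ φ ∈ dom, ∃ V : Set X, IsOpen V ∧ A ⊆ V ∧
    (∀ᵐ x ∂μ, x ∈ V ∩ Ω → 1 ≤ φ x) ∧ r = ENNReal.ofReal (graphNormSq μ q φ)}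

/-- Membership of `L₂(Ω)`, identified with `{1_Ω φ : φ ∈ L₂(X)} ⊆ L₂(X)`. -/
def MemL2 (μ : Measure X) (Ω : Set X) (φ : X → ℝ) : Prop :=
  MemLp φ 2 μ ∧ φ =ᵐ[μ] Ω.indicator φ

/-- A semigroup on `L₂(Y)` (extended to `L₂(X)` by `S_t φ = S_t (1_Y φ)`) is conservative
if `S_t 1_Y = 1_Y` for all `t > 0`. -/
def ConservativeOn (μ : Measure X) (Y : Set X) (S : ℝ → (X → ℝ) → (X → ℝ)) : Prop :=
  ∀ t > 0, S t (Y.indicator fun _ => (1 : ℝ)) =ᵐ[μ] Y.indicator fun _ => (1 : ℝ)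

/-- `S` is the submarkovian semigroup on `L₂(Y)`, extended to `L₂(X)` by
`S_t φ = S_t (1_Y φ)`, associated with the (Dirichlet) form with domain `dom` and
quadratic part `q`; the association is expressed by the standard characterisation
`q(φ) = lim_{t ↓ 0} t⁻¹ (φ, (I - S_t) φ)` with domain the set where the quotients
stay bounded.  The extension of `S` to `L_∞` is pinned down by monotone continuity. -/
structure IsSubmarkovSemigroupOn (μ : Measure X) (Y : Set X) (dom : Set (X → ℝ))
    (q : (X → ℝ) → ℝ) (S : ℝ → (X → ℝ) → (X → ℝ)) : Prop where
  proj : ∀ t > 0, ∀ φ : X → ℝ, S t φ =ᵐ[μ] S t (Y.indicator φ)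
  supported : ∀ t > 0, ∀ φ : X → ℝ, MemLp φ 2 μ → S t φ =ᵐ[μ] Y.indicator (S t φ)
  memLp : ∀ t > 0, ∀ φ : X → ℝ, MemLp φ 2 μ → MemLp (S t φ) 2 μ
  map_add : ∀ t > 0, ∀ φ ψ : X → ℝ, MemLp φ 2 μ → MemLp ψ 2 μ →
    S t (φ + ψ) =ᵐ[μ] S t φ + S t ψ
  map_smul : ∀ t > 0, ∀ (c : ℝ), ∀ φ : X → ℝ, MemLp φ 2 μ → S t (c • φ) =ᵐ[μ] c • S t φ
  semigroup : ∀ s > 0, ∀ t > 0, ∀ φ : X → ℝ, MemLp φ 2 μ →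
    S (s + t) φ =ᵐ[μ] S s (S t φ)
  symmetric : ∀ t > 0, ∀ φ ψ : X → ℝ, MemLp φ 2 μ → MemLp ψ 2 μ →
    ∫ x, S t φ x * ψ x ∂μ = ∫ x, φ x * S t ψ x ∂μ
  contraction : ∀ t > 0, ∀ φ : X → ℝ, MemLp φ 2 μ → eLpNorm (S t φ) 2 μ ≤ eLpNorm φ 2 μ
  submarkov : ∀ t > 0, ∀ φ : X → ℝ, (∀ᵐ x ∂μ, 0 ≤ φ x ∧ φ x ≤ 1) →
    ∀ᵐ x ∂μ, 0 ≤ S t φ x ∧ S t φ x ≤ 1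
  mono : ∀ t > 0, ∀ φ ψ : X → ℝ, φ ≤ᵐ[μ] ψ → S t φ ≤ᵐ[μ] S t ψ
  mono_cont : ∀ t > 0, ∀ (f : ℕ → X → ℝ) (φ : X → ℝ), (∀ n, f n ≤ᵐ[μ] f (n + 1)) →
    (∀ᵐ x ∂μ, Tendsto (fun n => f n x) atTop (𝓝 (φ x))) →
    ∀ᵐ x ∂μ, Tendsto (fun n => S t (f n) x) atTop (𝓝 (S t φ x))
  strong_cont : ∀ φ : X → ℝ, MemLp φ 2 μ →
    Tendsto (fun t => eLpNorm (S t φ - Y.indicator φ) 2 μ) (𝓝[>] 0) (𝓝 0)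
  mem_dom_iff : ∀ φ : X → ℝ, MemLp φ 2 μ → φ =ᵐ[μ] Y.indicator φ →
    ((∃ ψ ∈ dom, φ =ᵐ[μ] ψ) ↔
      BddAbove {r : ℝ | ∃ t > 0, r = t⁻¹ * ∫ x, φ x * (φ x - S t φ x) ∂μ})
  form_eq : ∀ φ ∈ dom, Tendsto (fun t : ℝ => t⁻¹ * ∫ x, φ x * (φ x - S t φ x) ∂μ)
    (𝓝[>] 0) (𝓝 (q φ))

/-- The truncated form `E_χ(φ) = E(χ φ, φ) - 2⁻¹ E(χ, φ²)` on `D(E) ∩ L_∞`. -/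
noncomputable def trunc (E : DirichletForm μ) (χ φ : X → ℝ) : ℝ :=
  E.form (χ * φ) φ - 2⁻¹ * E.form χ (φ * φ)

/-- The bounded truncations of `φ` used to extend `E_χ` by continuity to `D(E)`. -/
noncomputable def truncClip (E : DirichletForm μ) (χ φ : X → ℝ) (m : ℕ) : ℝ :=
  trunc E χ (fun x => max (-(m : ℝ)) (min (φ x) (m : ℝ)))

/-- The extension by continuity of the truncated form `E_χ` to all of `D(E)`. -/
noncomputable def truncExt (E : DirichletForm μ) (χ φ : X → ℝ) : ℝ :=
  limUnder atTop (truncClip E χ φ)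

/-- The convex set `C_Ω = {χ ∈ D(E) ∩ L_∞(X) : 0 ≤ χ ≤ 1_Ω}`. -/
def CSet (E : DirichletForm μ) (Ω : Set X) : Set (X → ℝ) :=
  {χ ∈ E.dom | ∀ᵐ x ∂μ, 0 ≤ χ x ∧ χ x ≤ Ω.indicator (fun _ => (1 : ℝ)) x}

/-- The Neumann form `E_N(φ) = sup {E_χ(φ) : χ ∈ C_Ω}` with domain `D(E)`. -/
noncomputable def neumann (E : DirichletForm μ) (Ω : Set X) (φ : X → ℝ) : ℝ :=
  sSup {r : ℝ | ∃ χ ∈ CSet E Ω, r = truncExt E χ φ}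

/-- The relaxation (lower semicontinuous regularisation) of the quadratic form `q`
with domain `dom`, as an `ℝ≥0∞`-valued function on `L₂`. -/
noncomputable def relaxVal (μ : Measure X) (dom : Set (X → ℝ)) (q : (X → ℝ) → ℝ)
    (φ : X → ℝ) : ℝ≥0∞ :=
  ⨅ (f : ℕ → X → ℝ) (_ : ∀ n, f n ∈ dom)
    (_ : Tendsto (fun n => eLpNorm (f n - φ) 2 μ) atTop (𝓝 0)),
    atTop.liminf fun n => ENNReal.ofReal (q (f n))

/-- The domain of the relaxation of `(dom, q)`. -/
def relaxDom (μ : Measure X) (dom : Set (X → ℝ)) (q : (X → ℝ) → ℝ) : Set (X → ℝ) :=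
  {φ | MemLp φ 2 μ ∧ relaxVal μ dom q φ ≠ ⊤}

/-- The quadratic form of the relaxation of `(dom, q)`. -/
noncomputable def relaxQ (μ : Measure X) (dom : Set (X → ℝ)) (q : (X → ℝ) → ℝ)
    (φ : X → ℝ) : ℝ :=
  (relaxVal μ dom q φ).toReal

/-- Closedness of a quadratic form `q` with domain `dom` on `L₂(X, μ)`. -/
def IsClosedForm (μ : Measure X) (dom : Set (X → ℝ)) (q : (X → ℝ) → ℝ) : Prop :=
  ∀ (f : ℕ → X → ℝ) (φ : X → ℝ), (∀ n, f n ∈ dom) → MemLp φ 2 μ →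
    Tendsto (fun n => eLpNorm (f n - φ) 2 μ) atTop (𝓝 0) →
    (∀ ε > 0, ∃ N, ∀ m ≥ N, ∀ n ≥ N, q (f m - f n) < ε) →
    φ ∈ dom ∧ Tendsto (fun n => q (f n - φ)) atTop (𝓝 0)


namespace DirichletForm

variable {X : Type*} [MeasurableSpace X] {μ : MeasureTheory.Measure X} (E : DirichletForm μ)

lemma neg_mem {φ : X → ℝ} (h : φ ∈ E.dom) : -φ ∈ E.dom := by
  simpa [neg_one_smul] using E.smul_mem (-1) φ h

lemma sub_mem {φ ψ : X → ℝ} (hφ : φ ∈ E.dom) (hψ : ψ ∈ E.dom) : φ - ψ ∈ E.dom := by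
  simpa [sub_eq_add_neg] using E.add_mem φ hφ (-ψ) (E.neg_mem hψ)

lemma form_smul_right (c : ℝ) {φ ψ : X → ℝ} (hφ : φ ∈ E.dom) (hψ : ψ ∈ E.dom) :
    E.form φ (c • ψ) = c * E.form φ ψ := by
  rw [E.symm, E.smul_left c ψ hψ φ hφ, E.symm]

lemma form_add_right {φ ψ χ : X → ℝ} (hφ : φ ∈ E.dom) (hψ : ψ ∈ E.dom) (hχ : χ ∈ E.dom) :
    E.form χ (φ + ψ) = E.form χ φ + E.form χ ψ := by
  rw [E.symm, E.add_left φ hφ ψ hψ χ hχ, E.symm χ φ, E.symm χ ψ]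

lemma form_neg_neg {φ : X → ℝ} (hφ : φ ∈ E.dom) : E.form (-φ) (-φ) = E.form φ φ := by
  have hneg : (-φ : X → ℝ) = (-1 : ℝ) • φ := (neg_one_smul ℝ φ).symm
  rw [hneg, E.smul_left (-1) φ hφ _ (by rw [← hneg]; exact E.neg_mem hφ),
    E.form_smul_right (-1) hφ hφ]
  ring

lemma q_sub_symm {φ ψ : X → ℝ} (hφ : φ ∈ E.dom) (hψ : ψ ∈ E.dom) :
    E.form (φ - ψ) (φ - ψ) = E.form (ψ - φ) (ψ - φ) := by
  have : (ψ - φ : X → ℝ) = -(φ - ψ) := by ring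
  rw [this, E.form_neg_neg (E.sub_mem hφ hψ)]

lemma form_expand {φ ψ : X → ℝ} (hφ : φ ∈ E.dom) (hψ : ψ ∈ E.dom) :
    E.form (φ + ψ) (φ + ψ) = E.form φ φ + 2 * E.form φ ψ + E.form ψ ψ := by
  have hs : φ + ψ ∈ E.dom := E.add_mem φ hφ ψ hψ
  rw [E.add_left φ hφ ψ hψ _ hs, E.form_add_right hφ hψ hφ, E.form_add_right hφ hψ hψ,
    E.symm ψ φ]
  ring

lemma form_sq_le {φ ψ : X → ℝ} (hφ : φ ∈ E.dom) (hψ : ψ ∈ E.dom) :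
    E.form φ ψ ^ 2 ≤ E.form φ φ * E.form ψ ψ := by
  have key : ∀ t : ℝ, 0 ≤ E.form ψ ψ * (t * t) + 2 * E.form φ ψ * t + E.form φ φ := by
    intro t
    have htψ : t • ψ ∈ E.dom := E.smul_mem t ψ hψ
    have h0 := E.nonneg _ (E.add_mem φ hφ _ htψ)
    have hexp := E.form_expand hφ htψ
    rw [E.form_smul_right t hφ hψ, E.smul_left t ψ hψ _ htψ, E.form_smul_right t hψ hψ] at hexp
    nlinarith [h0, hexp]
  have hd := discrim_le_zero key
  rw [discrim] at hd
  nlinarith [hd]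

lemma form_le_sqrt_mul {φ ψ : X → ℝ} (hφ : φ ∈ E.dom) (hψ : ψ ∈ E.dom) :
    E.form φ ψ ≤ Real.sqrt (E.form φ φ) * Real.sqrt (E.form ψ ψ) := by
  have h := E.form_sq_le hφ hψ
  have ha := E.nonneg φ hφ
  have hb := E.nonneg ψ hψ
  have h1 : E.form φ ψ ^ 2 ≤ (Real.sqrt (E.form φ φ) * Real.sqrt (E.form ψ ψ)) ^ 2 := by
    rw [mul_pow, Real.sq_sqrt ha, Real.sq_sqrt hb]; exact h
  nlinarith [h1, mul_nonneg (Real.sqrt_nonneg (E.form φ φ)) (Real.sqrt_nonneg (E.form ψ ψ))]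

lemma sqrt_form_add_le {φ ψ : X → ℝ} (hφ : φ ∈ E.dom) (hψ : ψ ∈ E.dom) :
    Real.sqrt (E.form (φ + ψ) (φ + ψ)) ≤
      Real.sqrt (E.form φ φ) + Real.sqrt (E.form ψ ψ) := by
  have h1 := E.form_expand hφ hψ
  have h2 := E.form_le_sqrt_mul hφ hψ
  have ha := E.nonneg φ hφ
  have hb := E.nonneg ψ hψ
  have h3 : E.form (φ + ψ) (φ + ψ) ≤
      (Real.sqrt (E.form φ φ) + Real.sqrt (E.form ψ ψ)) ^ 2 := by
    rw [add_sq, Real.sq_sqrt ha, Real.sq_sqrt hb]; nlinarith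
  calc Real.sqrt (E.form (φ + ψ) (φ + ψ)) ≤
      Real.sqrt ((Real.sqrt (E.form φ φ) + Real.sqrt (E.form ψ ψ)) ^ 2) :=
        Real.sqrt_le_sqrt h3
    _ = Real.sqrt (E.form φ φ) + Real.sqrt (E.form ψ ψ) := by
        rw [Real.sqrt_sq (by positivity)]

lemma sum_mem (u : ℕ → X → ℝ) (hu : ∀ n, u n ∈ E.dom) (s : Finset ℕ) :
    (∑ k ∈ s, u k) ∈ E.dom := by
  classical
  induction s using Finset.cons_induction with
  | empty => simpa using E.zero_mem
  | cons a s ha ih => rw [Finset.sum_cons]; exact E.add_mem _ (hu a) _ ih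

lemma sqrt_form_sum_le (u : ℕ → X → ℝ) (hu : ∀ n, u n ∈ E.dom) (s : Finset ℕ) :
    Real.sqrt (E.form (∑ k ∈ s, u k) (∑ k ∈ s, u k)) ≤
      ∑ k ∈ s, Real.sqrt (E.form (u k) (u k)) := by
  classical
  induction s using Finset.cons_induction with
  | empty =>
      simp only [Finset.sum_empty]
      have : E.form (0 : X → ℝ) 0 = 0 := by
        have := E.smul_left 0 0 E.zero_mem 0 E.zero_mem
        simpa using this
      simp [this]
  | cons a s ha ih =>
      rw [Finset.sum_cons, Finset.sum_cons]
      exact le_trans (E.sqrt_form_add_le (hu a) (E.sum_mem u hu s))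
        (by linarith [ih])

lemma q_zero : E.form (0 : X → ℝ) 0 = 0 := by
  simpa using E.smul_left 0 0 E.zero_mem 0 E.zero_mem

end DirichletForm
section IntegralHelpers

open MeasureTheory

variable {X : Type*} [MeasurableSpace X] {μ : Measure X}

lemma integrable_mul_of_memL2 {f g : X → ℝ} (hf : MemLp f 2 μ) (hg : MemLp g 2 μ) :
    Integrable (fun x => f x * g x) μ := by
  refine Integrable.mono' ((hf.integrable_sq.add hg.integrable_sq).const_mul (1/2))
    (hf.1.mul hg.1) ?_
  filter_upwards with x
  have : ‖f x * g x‖ = |f x| * |g x| := by rw [norm_mul]; rfl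
  rw [this]
  simp only [Pi.add_apply]
  nlinarith [sq_nonneg (|f x| - |g x|), sq_abs (f x), sq_abs (g x)]

lemma integral_sq_eq_norm_toLp {f : X → ℝ} (hf : MemLp f 2 μ) :
    ∫ x, f x ^ 2 ∂μ = ((eLpNorm f 2 μ).toReal) ^ 2 := by
  set F := hf.toLp f with hF
  have hc : f =ᵐ[μ] F := (hf.coeFn_toLp).symm
  have h1 : ∫ x, f x ^ 2 ∂μ = ∫ x, (F : X → ℝ) x * (F : X → ℝ) x ∂μ := by
    refine integral_congr_ae ?_
    filter_upwards [hc] with x hx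
    rw [← hx]; ring
  have h2 : (inner ℝ F F : ℝ) = ∫ x, (F : X → ℝ) x * (F : X → ℝ) x ∂μ := by
    rw [MeasureTheory.L2.inner_def]
    simp [RCLike.inner_apply, starRingEnd_apply, sq]
  have h3 : (inner ℝ F F : ℝ) = ‖F‖ ^ 2 := real_inner_self_eq_norm_sq F
  rw [h1, ← h2, h3, Lp.norm_toLp f hf]

lemma integral_sq_le_of_eLpNorm_le {f g : X → ℝ} (hf : MemLp f 2 μ) (hg : MemLp g 2 μ)
    (h : eLpNorm f 2 μ ≤ eLpNorm g 2 μ) :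
    ∫ x, f x ^ 2 ∂μ ≤ ∫ x, g x ^ 2 ∂μ := by
  rw [integral_sq_eq_norm_toLp hf, integral_sq_eq_norm_toLp hg]
  have := ENNReal.toReal_mono hg.2.ne h
  exact pow_le_pow_left₀ ENNReal.toReal_nonneg this 2

lemma integral_mul_self_le {f g : X → ℝ} (hf : MemLp f 2 μ) (hg : MemLp g 2 μ)
    (h : eLpNorm g 2 μ ≤ eLpNorm f 2 μ) :
    ∫ x, f x * g x ∂μ ≤ ∫ x, f x ^ 2 ∂μ := by
  have h1 : ∫ x, f x * g x ∂μ ≤ ∫ x, (1/2) * (f x ^ 2 + g x ^ 2) ∂μ := by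
    refine integral_mono (integrable_mul_of_memL2 hf hg)
      ((hf.integrable_sq.add hg.integrable_sq).const_mul (1/2)) ?_
    intro x
    simp only
    nlinarith [sq_nonneg (f x - g x)]
  have h2 : ∫ x, (1/2) * (f x ^ 2 + g x ^ 2) ∂μ
      = (1/2) * ((∫ x, f x ^ 2 ∂μ) + ∫ x, g x ^ 2 ∂μ) := by
    rw [integral_const_mul, integral_add hf.integrable_sq hg.integrable_sq]
  have h3 : ∫ x, g x ^ 2 ∂μ ≤ ∫ x, f x ^ 2 ∂μ := integral_sq_le_of_eLpNorm_le hg hf h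
  linarith

lemma abs_integral_mul_le {f g : X → ℝ} (hf : MemLp f 2 μ) (hg : MemLp g 2 μ)
    (h : eLpNorm g 2 μ ≤ eLpNorm f 2 μ) :
    |∫ x, f x * g x ∂μ| ≤ ∫ x, f x ^ 2 ∂μ := by
  rw [abs_le]
  constructor
  · have h1 : ∫ x, f x * (-g) x ∂μ ≤ ∫ x, f x ^ 2 ∂μ := by
      refine integral_mul_self_le hf hg.neg ?_
      rw [eLpNorm_neg]; exact h
    have h2 : ∫ x, f x * (-g) x ∂μ = -∫ x, f x * g x ∂μ := by
      rw [← integral_neg]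
      refine integral_congr_ae (Filter.Eventually.of_forall fun x => ?_)
      simp
    linarith [h1, h2.symm.trans_le h1]
  · exact integral_mul_self_le hf hg h

end IntegralHelpers
section Bump

open Metric

variable {X : Type*} [MetricSpace X]

lemma exists_bump [WeaklyLocallyCompactSpace X] {K : Set X} (hK : IsCompact K) :
    ∃ g : X → ℝ, Continuous g ∧ HasCompactSupport g ∧ (∀ x, 0 ≤ g x ∧ g x ≤ 1) ∧
      ∃ W : Set X, IsOpen W ∧ K ⊆ W ∧ ∀ x ∈ W, g x = 1 := by
  rcases K.eq_empty_or_nonempty with hKe | hKne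
  · exact ⟨0, continuous_const, by simp [HasCompactSupport, tsupport],
      fun x => by simp, ∅, isOpen_empty, by simp [hKe], by simp⟩
  obtain ⟨K', hK', hKK'⟩ := exists_compact_superset hK
  obtain ⟨δ, hδ, hsub⟩ := hK.exists_thickening_subset_open isOpen_interior hKK'
  set d : X → ℝ := fun x => infDist x K with hd
  have hdc : Continuous d := continuous_infDist_pt K
  refine ⟨fun x => max 0 (min 1 (2 - (2/δ) * d x)), ?_, ?_, ?_, ?_⟩
  · exact continuous_const.max (continuous_const.min (continuous_const.sub
      (continuous_const.mul hdc)))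
  · refine HasCompactSupport.intro hK' fun x hx => ?_
    have hxd : δ ≤ d x := by
      by_contra hlt
      push_neg at hlt
      exact hx (interior_subset (hsub ((mem_thickening_iff_infDist_lt hKne).2 hlt)))
    have : 2 - (2/δ) * d x ≤ 0 := by
      have h2 : (2/δ) * δ ≤ (2/δ) * d x :=
        mul_le_mul_of_nonneg_left hxd (by positivity)
      rw [div_mul_cancel₀] at h2 <;> [linarith; positivity]
    simp only [max_eq_left_iff]
    exact min_le_of_right_le this
  · intro x
    constructor
    · exact le_max_left _ _
    · exact max_le (by norm_num) (min_le_left _ _)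
  · refine ⟨{x | d x < δ/2}, isOpen_lt hdc continuous_const, ?_, ?_⟩
    · intro x hx
      simp only [Set.mem_setOf_eq, hd]
      rw [infDist_zero_of_mem hx]
      linarith
    · intro x hx
      simp only [Set.mem_setOf_eq] at hx
      have hdx : 0 ≤ d x := infDist_nonneg
      have : (1:ℝ) ≤ 2 - (2/δ) * d x := by
        have h2 : (2/δ) * d x ≤ (2/δ) * (δ/2) :=
          mul_le_mul_of_nonneg_left hx.le (by positivity)
        have h3 : (2/δ) * (δ/2) = 1 := by field_simp
        linarith
      simp [min_eq_left this, le_max_iff]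

lemma hasCompactSupport_tendsto_cocompact_zero {g : X → ℝ} (hg : HasCompactSupport g) :
    Filter.Tendsto g (Filter.cocompact X) (nhds 0) := by
  refine Filter.Tendsto.congr' ?_ tendsto_const_nhds
  have h1 : (tsupport g)ᶜ ∈ Filter.cocompact X := hg.compl_mem_cocompact
  filter_upwards [h1] with x hx
  exact (image_eq_zero_of_notMem_tsupport hx).symm

end Bump
section CutLemmas

variable {X : Type*}

lemma cut_nonneg (φ : X → ℝ) (x : X) : 0 ≤ cut φ x := le_max_left _ _

lemma cut_le_one (φ : X → ℝ) (x : X) : cut φ x ≤ 1 :=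
  max_le zero_le_one (min_le_right _ _)

lemma cut_eq_one {φ : X → ℝ} {x : X} (h : 1 ≤ φ x) : cut φ x = 1 := by
  unfold cut
  rw [min_eq_right h, max_eq_right zero_le_one]

lemma cut_sq_le (φ : X → ℝ) (x : X) : cut φ x ^ 2 ≤ φ x ^ 2 := by
  unfold cut
  rcases le_total (φ x) 0 with h | h
  · rw [min_eq_left (h.trans zero_le_one), max_eq_left h]
    simpa using sq_nonneg (φ x)
  · rcases le_total (φ x) 1 with h1 | h1
    · rw [min_eq_left h1, max_eq_right h]
    · rw [min_eq_right h1, max_eq_right zero_le_one]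
      nlinarith

end CutLemmas

lemma DirichletForm.q_eq {X : Type*} [MeasurableSpace X] {μ : Measure X}
    (E : DirichletForm μ) (φ : X → ℝ) : E.q φ = E.form φ φ := rfl

section KeyCompact

variable {X : Type*} [MeasurableSpace X]
variable [MetricSpace X] [BorelSpace X] [LocallyCompactSpace X] [SigmaCompactSpace X]
variable {μ : Measure X}

theorem key_compact (E : DirichletForm μ) (hdense : DenseInC0 E)
    (Ω : Set X) (hΩ : IsOpen Ω) (S SD : ℝ → (X → ℝ) → (X → ℝ))
    (hS : IsSubmarkovSemigroupOn μ Set.univ E.dom E.q S)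
    (hSD : IsSubmarkovSemigroupOn μ Ω (E.domD Ω) E.q SD)
    (heq : ∀ t > 0, ∀ φ : X → ℝ, MemL2 μ Ω φ → S t φ =ᵐ[μ] SD t φ)
    {K : Set X} (hK : IsCompact K) (hKb : K ⊆ frontier Ω) {δ : ℝ} (hδ : 0 < δ) :
    ∃ u ∈ E.dom, (∀ x, 0 ≤ u x ∧ u x ≤ 1) ∧
      ∃ V : Set X, IsOpen V ∧ K ⊆ V ∧ (∀ᵐ x ∂μ, x ∈ V ∩ Ω → 1 ≤ u x) ∧
      (∫ x, u x ^ 2 ∂μ) < δ ∧ E.q u < δ := by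
  classical
  -- Step 1: a bump and an element of the domain above 1 near K
  obtain ⟨g, hgc, hgs, _hgb, W, hWo, hKW, hgW⟩ := exists_bump hK
  obtain ⟨φ₀, hφ₀dom, _, _, hφ₀g⟩ :=
    hdense g hgc (hasCompactSupport_tendsto_cocompact_zero hgs) (1/2) (by norm_num)
  set χ : X → ℝ := (2 : ℝ) • φ₀ with hχdef
  have hχdom : χ ∈ E.dom := E.smul_mem 2 φ₀ hφ₀dom
  have hχ2 : MemLp χ 2 μ := E.dom_memLp χ hχdom
  have hχW : ∀ x ∈ W, 1 ≤ χ x := by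
    intro x hx
    have h1 := hφ₀g x
    have h2 := hgW x hx
    rw [abs_lt] at h1
    simp only [hχdef, Pi.smul_apply, smul_eq_mul]
    rw [h2] at h1
    linarith [h1.1, h1.2]
  -- Step 2: ψ = 1_Ω χ and η = χ - ψ
  set ψ : X → ℝ := Ω.indicator χ with hψdef
  have hψ2 : MemLp ψ 2 μ := hχ2.indicator hΩ.measurableSet
  have hψind : ψ = Ω.indicator ψ := by
    simp [hψdef, Set.indicator_indicator]
  set η : X → ℝ := fun x => χ x - ψ x with hηdef
  have hη2 : MemLp η 2 μ := hχ2.sub hψ2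
  have hχeq : χ = ψ + η := by funext x; simp [hηdef]
  have hψη0 : ∀ x, ψ x * η x = 0 := by
    intro x
    by_cases hx : x ∈ Ω
    · simp [hηdef, hψdef, Set.indicator_of_mem hx]
    · simp [hψdef, Set.indicator_of_notMem hx]
  have hηΩ : ∀ x ∈ Ω, η x = 0 := by
    intro x hx; simp [hηdef, hψdef, Set.indicator_of_mem hx]
  have hψΩ : ∀ x ∈ Ω, ψ x = χ x := fun x hx => Set.indicator_of_mem hx χ
  have hψMemL2 : MemL2 μ Ω ψ := ⟨hψ2, Filter.EventuallyEq.of_eq hψind⟩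
  set I : ℝ → ℝ := fun t => ∫ x, ψ x * (ψ x - S t ψ x) ∂μ with hIdef
  set A : ℝ → ℝ := fun t => ∫ x, χ x * (χ x - S t χ x) ∂μ with hAdef
  -- Step 3: I t ≤ A t for t > 0, and I t ≤ 2 ∫ ψ²
  have hstep : ∀ t, 0 < t → I t ≤ A t ∧ I t ≤ 2 * ∫ x, ψ x ^ 2 ∂μ := by
    intro t ht
    have hψS : MemLp (S t ψ) 2 μ := hS.memLp t ht ψ hψ2
    have hηS : MemLp (S t η) 2 μ := hS.memLp t ht η hη2
    have hχS : MemLp (S t χ) 2 μ := hS.memLp t ht χ hχ2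
    have hi1 : Integrable (fun x => ψ x * S t ψ x) μ := integrable_mul_of_memL2 hψ2 hψS
    have hi2 : Integrable (fun x => ψ x * S t η x) μ := integrable_mul_of_memL2 hψ2 hηS
    have hi3 : Integrable (fun x => η x * S t ψ x) μ := integrable_mul_of_memL2 hη2 hψS
    have hi4 : Integrable (fun x => η x * S t η x) μ := integrable_mul_of_memL2 hη2 hηS
    have hzero1 : ∫ x, η x * S t ψ x ∂μ = 0 := by
      have hae1 : S t ψ =ᵐ[μ] SD t ψ := heq t ht ψ hψMemL2
      have hae2 : SD t ψ =ᵐ[μ] Ω.indicator (SD t ψ) := hSD.supported t ht ψ hψ2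
      have hae : (fun x => η x * S t ψ x) =ᵐ[μ] fun _ => (0 : ℝ) := by
        filter_upwards [hae1, hae2] with x h1 h2
        by_cases hx : x ∈ Ω
        · simp [hηΩ x hx]
        · rw [h1, h2, Set.indicator_of_notMem hx, mul_zero]
      rw [integral_congr_ae hae, integral_zero]
    have hzero2 : ∫ x, ψ x * S t η x ∂μ = 0 := by
      have hsymm := hS.symmetric t ht η ψ hη2 hψ2
      have hcomm : ∫ x, ψ x * S t η x ∂μ = ∫ x, S t η x * ψ x ∂μ :=
        integral_congr_ae (Filter.Eventually.of_forall fun x => by ring)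
      rw [hcomm, hsymm]
      rw [show (∫ x, η x * S t ψ x ∂μ) = 0 from hzero1]
    have hIt : I t = (∫ x, ψ x * ψ x ∂μ) - ∫ x, ψ x * S t ψ x ∂μ := by
      have h1 : I t = ∫ x, (ψ x * ψ x - ψ x * S t ψ x) ∂μ :=
        integral_congr_ae (Filter.Eventually.of_forall fun x => by ring)
      rw [h1, integral_sub (integrable_mul_of_memL2 hψ2 hψ2) hi1]
    have hmap : S t χ =ᵐ[μ] S t ψ + S t η := by
      rw [hχeq]; exact hS.map_add t ht ψ η hψ2 hη2
    have hAt : A t = ((∫ x, ψ x * ψ x ∂μ) - ∫ x, ψ x * S t ψ x ∂μ)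
        + ((∫ x, η x * η x ∂μ) - ∫ x, η x * S t η x ∂μ) := by
      have h2 : A t = (∫ x, χ x * χ x ∂μ) - ∫ x, χ x * S t χ x ∂μ := by
        have h1 : A t = ∫ x, (χ x * χ x - χ x * S t χ x) ∂μ :=
          integral_congr_ae (Filter.Eventually.of_forall fun x => by ring)
        rw [h1, integral_sub (integrable_mul_of_memL2 hχ2 hχ2)
          (integrable_mul_of_memL2 hχ2 hχS)]
      have h3 : ∫ x, χ x * χ x ∂μ = (∫ x, ψ x * ψ x ∂μ) + ∫ x, η x * η x ∂μ := by
        have hpt : (fun x => χ x * χ x) = fun x => ψ x * ψ x + η x * η x := by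
          funext x
          have h0 := hψη0 x
          have hx : χ x = ψ x + η x := by rw [hχeq]; rfl
          linear_combination (χ x + ψ x + η x) * hx + 2 * h0
        calc ∫ x, χ x * χ x ∂μ = ∫ x, (ψ x * ψ x + η x * η x) ∂μ := by rw [hpt]
          _ = _ := integral_add (integrable_mul_of_memL2 hψ2 hψ2)
              (integrable_mul_of_memL2 hη2 hη2)
      have h4 : ∫ x, χ x * S t χ x ∂μ
          = (∫ x, ψ x * S t ψ x ∂μ) + ∫ x, η x * S t η x ∂μ := by
        have hae : (fun x => χ x * S t χ x) =ᵐ[μ] fun x =>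
            ψ x * S t ψ x + ψ x * S t η x + (η x * S t ψ x + η x * S t η x) := by
          filter_upwards [hmap] with x hx
          have hx2 : χ x = ψ x + η x := by rw [hχeq]; rfl
          rw [hx, hx2]
          simp only [Pi.add_apply]
          ring
        have hi12 : Integrable (fun x => ψ x * S t ψ x + ψ x * S t η x) μ := hi1.add hi2
        have hi34 : Integrable (fun x => η x * S t ψ x + η x * S t η x) μ := hi3.add hi4
        rw [integral_congr_ae hae, integral_add hi12 hi34,
          integral_add hi1 hi2, integral_add hi3 hi4, hzero1, hzero2]
        ring
      rw [h2, h3, h4]; ring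
    have hcontrη : ∫ x, η x * S t η x ∂μ ≤ ∫ x, η x * η x ∂μ := by
      have h1 := integral_mul_self_le hη2 hηS (hS.contraction t ht η hη2)
      have h2 : ∫ x, η x * η x ∂μ = ∫ x, η x ^ 2 ∂μ :=
        integral_congr_ae (Filter.Eventually.of_forall fun x => by ring)
      rw [h2]; exact h1
    constructor
    · rw [hIt, hAt]; linarith [hcontrη]
    · have habs : |∫ x, ψ x * S t ψ x ∂μ| ≤ ∫ x, ψ x ^ 2 ∂μ :=
        abs_integral_mul_le hψ2 hψS (hS.contraction t ht ψ hψ2)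
      have hsqψ : ∫ x, ψ x * ψ x ∂μ = ∫ x, ψ x ^ 2 ∂μ :=
        integral_congr_ae (Filter.Eventually.of_forall fun x => by ring)
      rw [hIt, hsqψ]
      rcases abs_le.mp habs with ⟨hl, _⟩
      linarith
  -- Step 4: smallness of the quotients near zero
  have hlim := hS.form_eq χ hχdom
  have hev : ∀ᶠ t in nhdsWithin 0 (Set.Ioi 0), t⁻¹ * A t < E.q χ + 1 :=
    hlim.eventually_lt_const (lt_add_one _)
  rw [eventually_nhdsWithin_iff] at hev
  rcases Metric.eventually_nhds_iff.mp hev with ⟨δ₀, hδ₀, hball⟩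
  -- Step 5: BddAbove and membership in the Dirichlet domain
  set M : ℝ := max (E.q χ + 1) (δ₀⁻¹ * (2 * ∫ x, ψ x ^ 2 ∂μ)) with hMdef
  have hBdd : BddAbove {r : ℝ | ∃ t > 0, r = t⁻¹ * ∫ x, ψ x * (ψ x - SD t ψ x) ∂μ} := by
    refine ⟨M, fun r hr => ?_⟩
    obtain ⟨t, ht, hr⟩ := hr
    have hDS : ∫ x, ψ x * (ψ x - SD t ψ x) ∂μ = I t := by
      refine integral_congr_ae ?_
      filter_upwards [heq t ht ψ hψMemL2] with x hx
      rw [hx]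
    rw [hr, hDS]
    rcases hstep t ht with ⟨hIA, hI2⟩
    have hψsq : 0 ≤ ∫ x, ψ x ^ 2 ∂μ := integral_nonneg fun x => sq_nonneg _
    rcases lt_or_ge t δ₀ with hlt | hge
    · have h1 : t⁻¹ * I t ≤ t⁻¹ * A t :=
        mul_le_mul_of_nonneg_left hIA (inv_nonneg.mpr ht.le)
      have h2 : t⁻¹ * A t < E.q χ + 1 := by
        refine hball ?_ ht
        rw [Real.dist_eq, sub_zero, abs_of_pos ht]; exact hlt
      exact le_trans h1 (le_trans h2.le (le_max_left _ _))
    · rcases le_or_gt (I t) 0 with hI0 | hI0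
      · have h0 : t⁻¹ * I t ≤ 0 := mul_nonpos_of_nonneg_of_nonpos (inv_nonneg.mpr ht.le) hI0
        refine le_trans h0 (le_trans ?_ (le_max_right _ _))
        positivity
      · have h1 : t⁻¹ ≤ δ₀⁻¹ := by
          apply inv_anti₀ hδ₀ hge
        have h2 : t⁻¹ * I t ≤ δ₀⁻¹ * (2 * ∫ x, ψ x ^ 2 ∂μ) :=
          mul_le_mul h1 hI2 hI0.le (inv_nonneg.mpr hδ₀.le)
        exact le_trans h2 (le_max_right _ _)
  obtain ⟨ψ', hψ'mem, hψψ'⟩ :=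
    (hSD.mem_dom_iff ψ hψ2 (Filter.EventuallyEq.of_eq hψind)).mpr hBdd
  obtain ⟨hψ'dom, f, hf, hftend⟩ := hψ'mem
  -- Step 6: pick a good approximant, build the test function
  obtain ⟨n, hn⟩ := (hftend.eventually_lt_const hδ).exists
  obtain ⟨hfndom, hfncpt, hfnΩ⟩ := hf n
  set w : X → ℝ := ψ' - f n with hwdef
  have hwdom : w ∈ E.dom := E.sub_mem hψ'dom hfndom
  obtain ⟨hudom, huq⟩ := E.markov w hwdom
  have hfψ'dom : f n - ψ' ∈ E.dom := E.sub_mem hfndom hψ'dom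
  have hgn : (∫ x, (f n - ψ') x ^ 2 ∂μ) + E.q (f n - ψ') < δ := hn
  have hq1 : 0 ≤ ∫ x, (f n - ψ') x ^ 2 ∂μ := integral_nonneg fun x => sq_nonneg _
  have hq2 : 0 ≤ E.q (f n - ψ') := E.nonneg _ hfψ'dom
  refine ⟨cut w, hudom, fun x => ⟨cut_nonneg w x, cut_le_one w x⟩,
    W \ tsupport (f n), hWo.sdiff (isClosed_tsupport _), ?_, ?_, ?_, ?_⟩
  · -- K ⊆ V
    intro x hx
    have hxΩ : x ∉ Ω := by
      have := hKb hx
      rw [hΩ.frontier_eq] at this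
      exact this.2
    exact ⟨hKW hx, fun hc => hxΩ (hfnΩ hc)⟩
  · -- a.e. lower bound
    filter_upwards [hψψ'] with x hx hxV
    have h1 : 1 ≤ χ x := hχW x hxV.1.1
    have h2 : f n x = 0 := image_eq_zero_of_notMem_tsupport hxV.1.2
    have h3 : ψ x = χ x := hψΩ x hxV.2
    have hw1 : 1 ≤ w x := by
      have : w x = ψ' x - f n x := rfl
      rw [this, h2, ← hx, h3]
      linarith
    rw [cut_eq_one hw1]
  · -- L² smallness
    have hsqint : ∫ x, cut w x ^ 2 ∂μ ≤ ∫ x, (f n - ψ') x ^ 2 ∂μ := by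
      refine integral_mono (E.dom_memLp _ hudom).integrable_sq
        (E.dom_memLp _ hfψ'dom).integrable_sq ?_
      intro x
      calc cut w x ^ 2 ≤ w x ^ 2 := cut_sq_le w x
        _ = (f n - ψ') x ^ 2 := by simp only [hwdef, Pi.sub_apply]; ring
    linarith
  · -- form smallness
    have h1 : E.q (cut w) ≤ E.q w := huq
    have h2 : E.q w = E.q (f n - ψ') := by
      rw [E.q_eq, E.q_eq, hwdef, E.q_sub_symm hfndom hψ'dom]
    linarith [h1, h2, hgn, hq1]

end KeyCompact
section Main

variable {X : Type*} [MeasurableSpace X]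
variable [MetricSpace X] [BorelSpace X] [LocallyCompactSpace X] [SigmaCompactSpace X]
variable {μ : Measure X}

theorem statement1' (E : DirichletForm μ) (hdense : DenseInC0 E)
    (Ω : Set X) (hΩ : IsOpen Ω) (S SD : ℝ → (X → ℝ) → (X → ℝ))
    (hS : IsSubmarkovSemigroupOn μ Set.univ E.dom E.q S)
    (hSD : IsSubmarkovSemigroupOn μ Ω (E.domD Ω) E.q SD)
    (heq : ∀ t > 0, ∀ φ : X → ℝ, MemL2 μ Ω φ → S t φ =ᵐ[μ] SD t φ) :
    relCap μ E.dom E.q Ω (frontier Ω) = 0 := by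
  classical
  have main : ∀ ε : ℝ, 0 < ε →
      relCap μ E.dom E.q Ω (frontier Ω) ≤ ENNReal.ofReal ε := by
    intro ε hε
    set c : ℝ := min 1 (ε / 9) with hcdef
    have hc0 : 0 < c := lt_min one_pos (by positivity)
    have hc1 : c ≤ 1 := min_le_left _ _
    have hc9 : c ≤ ε / 9 := min_le_right _ _
    have hkey : ∀ m : ℕ, ∃ u ∈ E.dom, (∀ x, 0 ≤ u x ∧ u x ≤ 1) ∧
        ∃ V : Set X, IsOpen V ∧ (frontier Ω ∩ compactCovering X m) ⊆ V ∧
        (∀ᵐ x ∂μ, x ∈ V ∩ Ω → 1 ≤ u x) ∧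
        (∫ x, u x ^ 2 ∂μ) < (c * (1/2) ^ m) ^ 2 ∧ E.q u < (c * (1/2) ^ m) ^ 2 :=
      fun m => key_compact E hdense Ω hΩ S SD hS hSD heq
        ((isCompact_compactCovering X m).inter_left isClosed_frontier)
        Set.inter_subset_left (by positivity)
    choose u hudom hubd V hVopen hKV haeV hL2 hQ using hkey
    have humem : ∀ m, MemLp (u m) 2 μ := fun m => E.dom_memLp _ (hudom m)
    have ha : ∀ m, eLpNorm (u m) 2 μ ≤ ENNReal.ofReal (c * (1/2) ^ m) := by
      intro m
      have h1 : ((eLpNorm (u m) 2 μ).toReal) ^ 2 < (c * (1/2) ^ m) ^ 2 := by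
        rw [← integral_sq_eq_norm_toLp (humem m)]; exact hL2 m
      have h2 : (eLpNorm (u m) 2 μ).toReal ≤ c * (1/2) ^ m := by
        nlinarith [ENNReal.toReal_nonneg (a := eLpNorm (u m) 2 μ),
          mul_pos hc0 (pow_pos (by norm_num : (0:ℝ) < 1/2) m)]
      calc eLpNorm (u m) 2 μ = ENNReal.ofReal ((eLpNorm (u m) 2 μ).toReal) :=
            (ENNReal.ofReal_toReal (humem m).2.ne).symm
        _ ≤ _ := ENNReal.ofReal_le_ofReal h2
    have hqa : ∀ m, Real.sqrt (E.form (u m) (u m)) ≤ c * (1/2) ^ m := by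
      intro m
      have h := Real.sqrt_le_sqrt (hQ m).le
      rwa [Real.sqrt_sq (by positivity)] at h
    set g : ℕ → X → ℝ := fun N => ∑ k ∈ Finset.range (N+1), u k with hgdef
    have hgdom : ∀ N, g N ∈ E.dom := fun N => E.sum_mem u hudom _
    have hgmem : ∀ N, MemLp (g N) 2 μ := fun N => E.dom_memLp _ (hgdom N)
    have htail : ∀ n m : ℕ, (∑ k ∈ Finset.Ico (n+1) (m+1), (c * (1/2:ℝ) ^ k)) ≤ c * (1/2) ^ n := by
      intro n m
      rcases le_or_gt (n+1) (m+1) with h | h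
      · rw [← Finset.mul_sum, geom_sum_Ico (by norm_num : (1/2:ℝ) ≠ 1) h]
        have hbound : ((1/2:ℝ) ^ (m+1) - (1/2) ^ (n+1)) / (1/2 - 1) ≤ (1/2) ^ n := by
          rw [div_le_iff_of_neg (by norm_num : (1/2:ℝ) - 1 < 0)]
          have h1 : (0:ℝ) ≤ (1/2:ℝ) ^ (m+1) := by positivity
          have h2 : (1/2:ℝ) ^ (n+1) = (1/2) ^ n * (1/2) := pow_succ _ _
          nlinarith
        exact mul_le_mul_of_nonneg_left hbound hc0.le
      · rw [Finset.Ico_eq_empty (by omega), Finset.sum_empty]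
        positivity
    have hdiff : ∀ n m : ℕ, n ≤ m → g m - g n = ∑ k ∈ Finset.Ico (n+1) (m+1), u k := by
      intro n m h
      exact (Finset.sum_Ico_eq_sub _ (by omega)).symm
    have heLp_tail : ∀ n m : ℕ, n ≤ m →
        eLpNorm (g m - g n) 2 μ ≤ ENNReal.ofReal (c * (1/2) ^ n) := by
      intro n m h
      rw [hdiff n m h]
      calc eLpNorm (∑ k ∈ Finset.Ico (n+1) (m+1), u k) 2 μ
          ≤ ∑ k ∈ Finset.Ico (n+1) (m+1), eLpNorm (u k) 2 μ :=
            eLpNorm_sum_le (fun i _ => (humem i).1) one_le_two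
        _ ≤ ∑ k ∈ Finset.Ico (n+1) (m+1), ENNReal.ofReal (c * (1/2) ^ k) :=
            Finset.sum_le_sum fun k _ => ha k
        _ = ENNReal.ofReal (∑ k ∈ Finset.Ico (n+1) (m+1), (c * (1/2) ^ k)) :=
            (ENNReal.ofReal_sum_of_nonneg fun k _ => by positivity).symm
        _ ≤ ENNReal.ofReal (c * (1/2) ^ n) := ENNReal.ofReal_le_ofReal (htail n m)
    set G : ℕ → Lp ℝ 2 μ := fun N => (hgmem N).toLp (g N) with hGdef
    have hGdist : ∀ N, dist (G N) (G (N+1)) ≤ c * (1/2) ^ N := by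
      intro N
      rw [dist_eq_norm]
      have hsub : G N - G (N+1) = ((hgmem N).sub (hgmem (N+1))).toLp (g N - g (N+1)) :=
        (MemLp.toLp_sub _ _).symm
      rw [hsub, Lp.norm_toLp]
      have h1 : eLpNorm (g N - g (N+1)) 2 μ ≤ ENNReal.ofReal (c * (1/2) ^ N) := by
        have hneg : g N - g (N+1) = -(g (N+1) - g N) := (neg_sub _ _).symm
        rw [hneg, eLpNorm_neg]
        exact heLp_tail N (N+1) (by omega)
      calc (eLpNorm (g N - g (N+1)) 2 μ).toReal
          ≤ (ENNReal.ofReal (c * (1/2) ^ N)).toReal :=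
            ENNReal.toReal_mono ENNReal.ofReal_ne_top h1
        _ = c * (1/2) ^ N := ENNReal.toReal_ofReal (by positivity)
    have hcauchy : CauchySeq G := cauchySeq_of_le_geometric (1/2) c (by norm_num) hGdist
    obtain ⟨F, hF⟩ := cauchySeq_tendsto_of_complete hcauchy
    set φ : X → ℝ := ⇑F with hφdef
    have hφ2 : MemLp φ 2 μ := Lp.memLp F
    have hgG : ∀ N, g N =ᵐ[μ] ⇑(G N) := fun N => ((hgmem N).coeFn_toLp).symm
    have heLpGF : ∀ N, eLpNorm (g N - φ) 2 μ = ENNReal.ofReal ‖G N - F‖ := by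
      intro N
      have h1 : g N - φ =ᵐ[μ] ⇑(G N - F) := by
        filter_upwards [hgG N, Lp.coeFn_sub (G N) F] with x hx1 hx2
        simp only [Pi.sub_apply, hx2, hx1, hφdef]
      rw [eLpNorm_congr_ae h1, Lp.norm_def, ENNReal.ofReal_toReal (Lp.eLpNorm_ne_top _)]
    have hL2tendsto : Tendsto (fun N => eLpNorm (g N - φ) 2 μ) atTop (𝓝 0) := by
      have hnorm : Tendsto (fun N => ‖G N - F‖) atTop (𝓝 0) :=
        tendsto_iff_norm_sub_tendsto_zero.mp hF
      have h2 := ENNReal.tendsto_ofReal hnorm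
      rw [ENNReal.ofReal_zero] at h2
      exact h2.congr fun N => (heLpGF N).symm
    have hsqrtq_tail : ∀ n m : ℕ, n ≤ m →
        Real.sqrt (E.form (g m - g n) (g m - g n)) ≤ c * (1/2) ^ n := by
      intro n m h
      rw [hdiff n m h]
      calc Real.sqrt (E.form (∑ k ∈ Finset.Ico (n+1) (m+1), u k)
            (∑ k ∈ Finset.Ico (n+1) (m+1), u k))
          ≤ ∑ k ∈ Finset.Ico (n+1) (m+1), Real.sqrt (E.form (u k) (u k)) :=
            E.sqrt_form_sum_le u hudom _
        _ ≤ ∑ k ∈ Finset.Ico (n+1) (m+1), (c * (1/2) ^ k) :=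
            Finset.sum_le_sum fun k _ => hqa k
        _ ≤ c * (1/2) ^ n := htail n m
    have hq_tail : ∀ n m : ℕ, n ≤ m →
        E.form (g m - g n) (g m - g n) ≤ (c * (1/2) ^ n) ^ 2 := by
      intro n m h
      have h0 : 0 ≤ E.form (g m - g n) (g m - g n) :=
        E.nonneg _ (E.sub_mem (hgdom m) (hgdom n))
      have h1 := hsqrtq_tail n m h
      nlinarith [Real.sq_sqrt h0, Real.sqrt_nonneg (E.form (g m - g n) (g m - g n))]
    have hformCauchy : ∀ ε' > 0, ∃ N, ∀ m ≥ N, ∀ n ≥ N,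
        E.form (g m - g n) (g m - g n) < ε' := by
      intro ε' hε'
      obtain ⟨N, hN⟩ : ∃ N : ℕ, (c * (1/2:ℝ) ^ N) ^ 2 < ε' := by
        have h1 : Tendsto (fun N : ℕ => (1/2:ℝ) ^ N) atTop (𝓝 0) :=
          tendsto_pow_atTop_nhds_zero_of_lt_one (by norm_num) (by norm_num)
        have h2 : Tendsto (fun N : ℕ => (c * (1/2:ℝ) ^ N) ^ 2) atTop (𝓝 0) := by
          have h3 := (h1.const_mul c).pow 2
          simpa using h3
        exact (h2.eventually_lt_const hε').exists
      have hmono : ∀ n : ℕ, N ≤ n → (c * (1/2:ℝ) ^ n) ^ 2 ≤ (c * (1/2) ^ N) ^ 2 := by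
        intro n hn
        have h1 : (1/2:ℝ) ^ n ≤ (1/2) ^ N :=
          pow_le_pow_of_le_one (by norm_num) (by norm_num) hn
        have h2 : (0:ℝ) ≤ c * (1/2:ℝ) ^ n := by positivity
        have h3 : c * (1/2:ℝ) ^ n ≤ c * (1/2) ^ N := mul_le_mul_of_nonneg_left h1 hc0.le
        exact pow_le_pow_left₀ h2 h3 2
      refine ⟨N, fun m hm n hn => ?_⟩
      rcases le_total n m with h | h
      · exact lt_of_le_of_lt (le_trans (hq_tail n m h) (hmono n hn)) hN
      · rw [E.q_sub_symm (hgdom m) (hgdom n)]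
        exact lt_of_le_of_lt (le_trans (hq_tail m n h) (hmono m hm)) hN
    obtain ⟨hφdom, hformtend⟩ := E.closed g φ hgdom hφ2 hL2tendsto hformCauchy
    have htim : TendstoInMeasure μ g atTop φ :=
      tendstoInMeasure_of_tendsto_eLpNorm (p := 2) (by norm_num)
        (fun N => (hgmem N).1) hφ2.1 hL2tendsto
    obtain ⟨ns, hns, haeconv⟩ := htim.exists_seq_tendsto_ae
    have haeLB : ∀ᵐ x ∂μ, x ∈ (⋃ m, V m) ∩ Ω → 1 ≤ φ x := by
      filter_upwards [haeconv, ae_all_iff.mpr haeV] with x hconv hV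
      intro hx
      obtain ⟨hxU, hxΩ⟩ := hx
      obtain ⟨m, hm⟩ := Set.mem_iUnion.mp hxU
      have h1 : 1 ≤ u m x := hV m ⟨hm, hxΩ⟩
      have h2 : ∀ᶠ i in atTop, u m x ≤ g (ns i) x := by
        filter_upwards [eventually_ge_atTop m] with i hi
        have hmi : m ≤ ns i := le_trans hi hns.le_apply
        have h3 := Finset.single_le_sum (f := fun k => u k x)
          (fun k _ => (hubd k x).1) (Finset.mem_range.mpr (by omega : m < ns i + 1))
        simpa [hgdef, Finset.sum_apply] using h3
      exact le_trans h1 (ge_of_tendsto hconv h2)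
    have hsum_a : ∀ N : ℕ, (∑ k ∈ Finset.range (N+1), (c * (1/2:ℝ) ^ k)) ≤ 2 * c := by
      intro N
      rw [← Finset.mul_sum]
      have h1 := sum_geometric_two_le (N+1)
      nlinarith [hc0]
    have hGnorm : ∀ N, ‖G N‖ ≤ 2 * c := by
      intro N
      rw [hGdef, Lp.norm_toLp]
      have h1 : eLpNorm (g N) 2 μ ≤ ENNReal.ofReal (2 * c) := by
        calc eLpNorm (g N) 2 μ
            ≤ ∑ k ∈ Finset.range (N+1), eLpNorm (u k) 2 μ :=
              eLpNorm_sum_le (fun i _ => (humem i).1) one_le_two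
          _ ≤ ∑ k ∈ Finset.range (N+1), ENNReal.ofReal (c * (1/2) ^ k) :=
              Finset.sum_le_sum fun k _ => ha k
          _ = ENNReal.ofReal (∑ k ∈ Finset.range (N+1), (c * (1/2) ^ k)) :=
              (ENNReal.ofReal_sum_of_nonneg fun k _ => by positivity).symm
          _ ≤ ENNReal.ofReal (2 * c) := ENNReal.ofReal_le_ofReal (hsum_a N)
      calc (eLpNorm (g N) 2 μ).toReal ≤ (ENNReal.ofReal (2 * c)).toReal :=
            ENNReal.toReal_mono ENNReal.ofReal_ne_top h1
        _ = 2 * c := ENNReal.toReal_ofReal (by positivity)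
    have hFnorm : ‖F‖ ≤ 2 * c :=
      le_of_tendsto hF.norm (Filter.Eventually.of_forall hGnorm)
    have hInt : ∫ x, φ x ^ 2 ∂μ ≤ (2 * c) ^ 2 := by
      rw [integral_sq_eq_norm_toLp hφ2]
      have h1 : (eLpNorm φ 2 μ).toReal = ‖F‖ := (Lp.norm_def F).symm
      rw [h1]
      nlinarith [norm_nonneg F, hFnorm]
    have hsqgN : ∀ N, Real.sqrt (E.form (g N) (g N)) ≤ 2 * c := by
      intro N
      calc Real.sqrt (E.form (g N) (g N))
          ≤ ∑ k ∈ Finset.range (N+1), Real.sqrt (E.form (u k) (u k)) :=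
            E.sqrt_form_sum_le u hudom _
        _ ≤ ∑ k ∈ Finset.range (N+1), (c * (1/2) ^ k) :=
            Finset.sum_le_sum fun k _ => hqa k
        _ ≤ 2 * c := hsum_a N
    have hsqφ : Real.sqrt (E.form φ φ) ≤ 2 * c := by
      have hstep : ∀ N, Real.sqrt (E.form φ φ)
          ≤ 2 * c + Real.sqrt (E.form (g N - φ) (g N - φ)) := by
        intro N
        have hdec : φ = g N + (φ - g N) := by
          funext x; simp
        calc Real.sqrt (E.form φ φ)
            = Real.sqrt (E.form (g N + (φ - g N)) (g N + (φ - g N))) := by rw [← hdec]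
          _ ≤ Real.sqrt (E.form (g N) (g N))
              + Real.sqrt (E.form (φ - g N) (φ - g N)) :=
              E.sqrt_form_add_le (hgdom N) (E.sub_mem hφdom (hgdom N))
          _ ≤ 2 * c + Real.sqrt (E.form (g N - φ) (g N - φ)) := by
              rw [E.q_sub_symm hφdom (hgdom N)]
              exact add_le_add_left (hsqgN N) _
      have hcont : Tendsto Real.sqrt (𝓝 0) (𝓝 0) := by
        simpa [Real.sqrt_zero] using (Real.continuous_sqrt.tendsto 0)
      have hlim2 : Tendsto (fun N => 2 * c + Real.sqrt (E.form (g N - φ) (g N - φ)))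
          atTop (𝓝 (2 * c + 0)) :=
        Tendsto.const_add _ (hcont.comp hformtend)
      have := ge_of_tendsto hlim2 (Filter.Eventually.of_forall hstep)
      simpa using this
    have hqφ : E.form φ φ ≤ (2 * c) ^ 2 := by
      have h0 : 0 ≤ E.form φ φ := E.nonneg _ hφdom
      nlinarith [Real.sq_sqrt h0, Real.sqrt_nonneg (E.form φ φ)]
    have hgns : graphNormSq μ E.q φ < ε := by
      unfold graphNormSq
      have h8 : (2 * c) ^ 2 + (2 * c) ^ 2 ≤ 8 * c := by nlinarith
      have hq' : E.q φ ≤ (2 * c) ^ 2 := hqφ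
      linarith [hInt, hq', hc9, hε]
    have hmemset : ENNReal.ofReal (graphNormSq μ E.q φ) ∈
        {r : ℝ≥0∞ | ∃ ψ ∈ E.dom, ∃ V : Set X, IsOpen V ∧ frontier Ω ⊆ V ∧
          (∀ᵐ x ∂μ, x ∈ V ∩ Ω → 1 ≤ ψ x) ∧ r = ENNReal.ofReal (graphNormSq μ E.q ψ)} := by
      refine ⟨φ, hφdom, ⋃ m, V m, isOpen_iUnion hVopen, ?_, haeLB, rfl⟩
      intro x hx
      have hmemc : x ∈ ⋃ m, compactCovering X m := by
        rw [iUnion_compactCovering]; trivial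
      obtain ⟨m, hm⟩ := Set.mem_iUnion.mp hmemc
      exact Set.mem_iUnion.mpr ⟨m, hKV m ⟨hx, hm⟩⟩
    have hle : relCap μ E.dom E.q Ω (frontier Ω)
        ≤ ENNReal.ofReal (graphNormSq μ E.q φ) := sInf_le hmemset
    exact le_trans hle (ENNReal.ofReal_le_ofReal hgns.le)
  refine le_antisymm ?_ zero_le
  refine ENNReal.le_of_forall_pos_le_add fun ε hε _ => ?_
  rw [zero_add]
  calc relCap μ E.dom E.q Ω (frontier Ω) ≤ ENNReal.ofReal ε := main ε (by exact_mod_cast hε)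
    _ = (ε : ℝ≥0∞) := ENNReal.ofReal_coe_nnreal

end Main
section Statements

variable [MetricSpace X] [BorelSpace X] [LocallyCompactSpace X] [SigmaCompactSpace X]
variable {μ : Measure X} [Measure.Regular μ] [Measure.IsOpenPosMeasure μ]

/-- If `S_t φ = S^D_t φ` for all `φ ∈ L₂(Ω)` and `t > 0` then `cap_Ω(∂Ω) = 0`. -/
theorem statement1 (E : DirichletForm μ) (hloc : IsLocal E) (hdense : DenseInC0 E)
    (Ω : Set X) (hΩ : IsOpen Ω) (S SD : ℝ → (X → ℝ) → (X → ℝ))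
    (hS : IsSubmarkovSemigroupOn μ Set.univ E.dom E.q S)
    (hSD : IsSubmarkovSemigroupOn μ Ω (E.domD Ω) E.q SD)
    (heq : ∀ t > 0, ∀ φ : X → ℝ, MemL2 μ Ω φ → S t φ =ᵐ[μ] SD t φ) :
    relCap μ E.dom E.q Ω (frontier Ω) = 0 :=
  statement1' E hdense Ω hΩ S SD hS hSD heq

end Statements

end DirichletPaper
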